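/- arXiv:1307.0656 — 10 statements merged into one kernel-verified Lean document; each statement's English description precedes it below -/
import Mathlib

section
/- Let α ≤ 0 and ε ≥ 0, and let f : (0,1) → ℝ satisfy |f(x) + (1-x)^α f(y/(1-x)) - f(y) - (1-y)^α f(x/(1-y))| ≤ ε for all (x,y) with x, y, x+y ∈ (0,1). Define F(u,v) = (u+v)^α f(v/(u+v)) for u, v > 0. Then |F(u+v, w) + F(u,v) - F(u+w, v) - F(u,w)| ≤ ε(u+v+w)^α for all u, v, w > 0. -/
theorem stmt2 (α ε : ℝ) (hα : α ≤ 0) (hε : 0 ≤ ε) (f : ℝ → ℝ)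
    (h : ∀ x y : ℝ, 0 < x → 0 < y → x + y < 1 →
      |f x + (1 - x) ^ α * f (y / (1 - x)) - f y - (1 - y) ^ α * f (x / (1 - y))| ≤ ε)
    (F : ℝ → ℝ → ℝ)
    (hF : ∀ u v : ℝ, 0 < u → 0 < v → F u v = (u + v) ^ α * f (v / (u + v))) :
    ∀ u v w : ℝ, 0 < u → 0 < v → 0 < w →
      |F (u + v) w + F u v - F (u + w) v - F u w| ≤ ε * (u + v + w) ^ α := by
  intro u v w hu hv hw
  set s := u + v + w with hs_def
  have hs : 0 < s := by positivity
  have hx : 0 < w / s := div_pos hw hs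
  have hy : 0 < v / s := div_pos hv hs
  have hxy : w / s + v / s < 1 := by
    rw [← add_div, div_lt_one hs]; simp [hs_def]; linarith
  have key := h (w / s) (v / s) hx hy hxy
  have huv : (0:ℝ) < u + v := by linarith
  have huw : (0:ℝ) < u + w := by linarith
  have e1 : 1 - w / s = (u + v) / s := by field_simp; ring
  have e2 : (v / s) / ((u + v) / s) = v / (u + v) := by
    field_simp
  have e3 : 1 - v / s = (u + w) / s := by field_simp; ring
  have e4 : (w / s) / ((u + w) / s) = w / (u + w) := by
    field_simp
  rw [e1, e2, e3, e4] at key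
  rw [hF (u + v) w (by linarith) hw, hF u v hu hv, hF (u + w) v (by linarith) hv,
    hF u w hu hw]
  have r1 : (u + v + w : ℝ) = s := rfl
  have r2 : (u + v : ℝ) ^ α = s ^ α * ((u + v) / s) ^ α := by
    rw [← Real.mul_rpow hs.le (by positivity), mul_div_cancel₀ _ hs.ne']
  have r3 : (u + w : ℝ) ^ α = s ^ α * ((u + w) / s) ^ α := by
    rw [← Real.mul_rpow hs.le (by positivity), mul_div_cancel₀ _ hs.ne']
  have r4 : (u + w + v : ℝ) = s := by rw [hs_def]; ring
  rw [r1, r2, r3, r4]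
  have factored : s ^ α * f (w / s) + s ^ α * ((u + v) / s) ^ α * f (v / (u + v)) -
      s ^ α * f (v / s) - s ^ α * ((u + w) / s) ^ α * f (w / (u + w)) =
      s ^ α * (f (w / s) + ((u + v) / s) ^ α * f (v / (u + v)) - f (v / s) -
        ((u + w) / s) ^ α * f (w / (u + w))) := by ring
  rw [factored, abs_mul, abs_of_nonneg (Real.rpow_nonneg hs.le α), mul_comm ε]
  exact mul_le_mul_of_nonneg_left key (Real.rpow_nonneg hs.le α)
end

section
/- Let α ≤ 0, ε ≥ 0, and let F : (0,∞)² → ℝ satisfy F(tu,tv) = t^α F(u,v) for all t,u,v > 0 and |F(u+v,w) + F(u,v) - F(u+w,v) - F(u,w)| ≤ ε(u+v+w)^α for all u,v,w > 0. Define g(u) = F(u,1) - F(1,u) and G(u,v) = F(u,v) + g(v). Then |G(u,v) - G(v,u)| ≤ 3ε(u+v+1)^α for all u, v > 0. -/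
theorem stmt3 (α ε : ℝ) (hα : α ≤ 0) (hε : 0 ≤ ε) (F : ℝ → ℝ → ℝ)
    (hhom : ∀ t u v : ℝ, 0 < t → 0 < u → 0 < v → F (t * u) (t * v) = t ^ α * F u v)
    (hineq : ∀ u v w : ℝ, 0 < u → 0 < v → 0 < w →
      |F (u + v) w + F u v - F (u + w) v - F u w| ≤ ε * (u + v + w) ^ α)
    (g : ℝ → ℝ) (hg : ∀ u : ℝ, 0 < u → g u = F u 1 - F 1 u)
    (G : ℝ → ℝ → ℝ) (hG : ∀ u v : ℝ, 0 < u → 0 < v → G u v = F u v + g v) :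
    ∀ u v : ℝ, 0 < u → 0 < v → |G u v - G v u| ≤ 3 * ε * (u + v + 1) ^ α := by
  intro u v hu hv
  have h1 := hineq 1 u v one_pos hu hv
  have h2 := hineq u 1 v hu one_pos hv
  have h3 := hineq v 1 u hv one_pos hu
  rw [show (1:ℝ) + u = u + 1 by ring, show (1:ℝ) + v = v + 1 by ring,
    show u + 1 + v = u + v + 1 by ring] at h1
  rw [show u + 1 + v = u + v + 1 by ring] at h2
  rw [show v + u = u + v by ring, show v + 1 + u = u + v + 1 by ring] at h3
  have key : G u v - G v u =
      (F (u + 1) v + F 1 u - F (v + 1) u - F 1 v)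
      - (F (u + 1) v + F u 1 - F (u + v) 1 - F u v)
      + (F (v + 1) u + F v 1 - F (u + v) 1 - F v u) := by
    rw [hG u v hu hv, hG v u hv hu, hg u hu, hg v hv]; ring
  rw [abs_le] at h1 h2 h3 ⊢
  constructor <;> [skip; skip] <;> rw [key] <;> obtain ⟨a1, b1⟩ := h1 <;>
    obtain ⟨a2, b2⟩ := h2 <;> obtain ⟨a3, b3⟩ := h3 <;> linarith
end

section
/- Let α < 0 and let g : (0,∞) → ℝ satisfy g(uv) = g(u) v^α + g(v) for all u, v > 0. Then there exists c ∈ ℝ such that g(u) = c(u^α - 1) for all u > 0; in fact c = g(2)/(2^α - 1). -/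
theorem stmt4 (α : ℝ) (hα : α < 0) (g : ℝ → ℝ)
    (hg : ∀ u v : ℝ, 0 < u → 0 < v → g (u * v) = g u * v ^ α + g v) :
    ∃ c : ℝ, c = g 2 / ((2 : ℝ) ^ α - 1) ∧
      ∀ u : ℝ, 0 < u → g u = c * (u ^ α - 1) := by
  have h2 : (2 : ℝ) ^ α < 1 := Real.rpow_lt_one_of_one_lt_of_neg (by norm_num) hα
  have hne : (2 : ℝ) ^ α - 1 ≠ 0 := by linarith
  refine ⟨g 2 / ((2 : ℝ) ^ α - 1), rfl, fun u hu => ?_⟩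
  have h1 := hg u 2 hu (by norm_num)
  have h2' := hg 2 u (by norm_num) hu
  rw [show u * 2 = 2 * u by ring, h2'] at h1
  field_simp
  nlinarith [h1]
end

section
/- Let α < 0, ε ≥ 0, and suppose F : (0,∞)² → ℝ satisfies F(tu,tv) = t^α F(u,v) for all t,u,v > 0, and g(u) := F(u,1) - F(1,u) satisfies |F(u,v) + g(v) - F(v,u) - g(u)| ≤ 3ε(u+v+1)^α for all u,v > 0. Then g(uv) = g(u)v^α + g(v) for all u, v > 0, and consequently g(u) = c(u^α - 1) with c = g(2)(2^α - 1)^{-1}. -/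
theorem stmt5 (α ε : ℝ) (hα : α < 0) (hε : 0 ≤ ε) (F : ℝ → ℝ → ℝ)
    (hhom : ∀ t u v : ℝ, 0 < t → 0 < u → 0 < v → F (t * u) (t * v) = t ^ α * F u v)
    (g : ℝ → ℝ) (hg : ∀ u : ℝ, 0 < u → g u = F u 1 - F 1 u)
    (hineq : ∀ u v : ℝ, 0 < u → 0 < v →
      |F u v + g v - F v u - g u| ≤ 3 * ε * (u + v + 1) ^ α) :
    (∀ u v : ℝ, 0 < u → 0 < v → g (u * v) = g u * v ^ α + g v) ∧
      ∀ u : ℝ, 0 < u → g u = g 2 * ((2 : ℝ) ^ α - 1)⁻¹ * (u ^ α - 1) := by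
  have key : ∀ u v : ℝ, 0 < u → 0 < v → g (u * v) = g u * v ^ α + g v := by
    intro u v hu hv
    have huv : 0 < u * v := mul_pos hu hv
    set X : ℝ := g (u * v) - g u * v ^ α - g v with hX
    have hbound : ∀ t : ℝ, 0 < t → t ^ α * |X| ≤ 9 * ε := by
      intro t ht
      have htα : 0 < t ^ α := Real.rpow_pos_of_pos ht α
      have A1 : F (t * (u * v)) (t * 1) = t ^ α * F (u * v) 1 :=
        hhom t (u * v) 1 ht huv one_pos
      have A2 : F (t * 1) (t * (u * v)) = t ^ α * F 1 (u * v) :=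
        hhom t 1 (u * v) ht one_pos huv
      have A3 : F (t * (u * v)) (t * v) = t ^ α * F (u * v) v :=
        hhom t (u * v) v ht huv hv
      have A4 : F (t * v) (t * (u * v)) = t ^ α * F v (u * v) :=
        hhom t v (u * v) ht hv huv
      have A5 : F (t * v) (t * 1) = t ^ α * F v 1 := hhom t v 1 ht hv one_pos
      have A6 : F (t * 1) (t * v) = t ^ α * F 1 v := hhom t 1 v ht one_pos hv
      have B1 : F (u * v) v = v ^ α * F u 1 := by
        have h := hhom v u 1 hv hu one_pos
        rw [mul_one] at h
        rw [mul_comm u v]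
        exact h
      have B2 : F v (u * v) = v ^ α * F 1 u := by
        have h := hhom v 1 u hv one_pos hu
        rw [mul_one] at h
        rw [mul_comm u v]
        exact h
      have hguv := hg (u * v) huv
      have hgu := hg u hu
      have hgv := hg v hv
      have key_eq : t ^ α * X =
          (F (t * (u * v)) (t * 1) + g (t * 1) - F (t * 1) (t * (u * v)) - g (t * (u * v)))
          - (F (t * (u * v)) (t * v) + g (t * v) - F (t * v) (t * (u * v)) - g (t * (u * v)))
          - (F (t * v) (t * 1) + g (t * 1) - F (t * 1) (t * v) - g (t * v)) := by
        rw [A1, A2, A3, A4, A5, A6, B1, B2, hX, hguv, hgu, hgv]; ring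
      have pow1 : (t * (u * v) + t * 1 + 1 : ℝ) ^ α ≤ 1 :=
        Real.rpow_le_one_of_one_le_of_nonpos (by nlinarith) hα.le
      have pow2 : (t * (u * v) + t * v + 1 : ℝ) ^ α ≤ 1 :=
        Real.rpow_le_one_of_one_le_of_nonpos (by nlinarith) hα.le
      have pow3 : (t * v + t * 1 + 1 : ℝ) ^ α ≤ 1 :=
        Real.rpow_le_one_of_one_le_of_nonpos (by nlinarith) hα.le
      have I1 := hineq (t * (u * v)) (t * 1) (mul_pos ht huv) (mul_pos ht one_pos)
      have I2 := hineq (t * (u * v)) (t * v) (mul_pos ht huv) (mul_pos ht hv)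
      have I3 := hineq (t * v) (t * 1) (mul_pos ht hv) (mul_pos ht one_pos)
      have h3ε : (0:ℝ) ≤ 3 * ε := by linarith
      have hI1 : |F (t * (u * v)) (t * 1) + g (t * 1) - F (t * 1) (t * (u * v)) - g (t * (u * v))| ≤ 3 * ε := by
        refine I1.trans ?_
        calc 3 * ε * (t * (u * v) + t * 1 + 1) ^ α ≤ 3 * ε * 1 :=
              mul_le_mul_of_nonneg_left pow1 h3ε
          _ = 3 * ε := mul_one _
      have hI2 : |F (t * (u * v)) (t * v) + g (t * v) - F (t * v) (t * (u * v)) - g (t * (u * v))| ≤ 3 * ε := by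
        refine I2.trans ?_
        calc 3 * ε * (t * (u * v) + t * v + 1) ^ α ≤ 3 * ε * 1 :=
              mul_le_mul_of_nonneg_left pow2 h3ε
          _ = 3 * ε := mul_one _
      have hI3 : |F (t * v) (t * 1) + g (t * 1) - F (t * 1) (t * v) - g (t * v)| ≤ 3 * ε := by
        refine I3.trans ?_
        calc 3 * ε * (t * v + t * 1 + 1) ^ α ≤ 3 * ε * 1 :=
              mul_le_mul_of_nonneg_left pow3 h3ε
          _ = 3 * ε := mul_one _
      have h1 := abs_le.mp hI1
      have h2 := abs_le.mp hI2
      have h3 := abs_le.mp hI3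
      have habs : t ^ α * |X| = |t ^ α * X| := by
        rw [abs_mul, abs_of_pos htα]
      rw [habs, key_eq, abs_le]
      constructor <;> linarith [h1.1, h1.2, h2.1, h2.2, h3.1, h3.2]
    have hX0 : X = 0 := by
      by_contra hne
      have hpos : 0 < |X| := abs_pos.mpr hne
      have hbase : (0 : ℝ) < 9 * ε / |X| + 1 := by positivity
      set t : ℝ := (9 * ε / |X| + 1) ^ α⁻¹ with ht
      have ht0 : 0 < t := Real.rpow_pos_of_pos hbase _
      have htα : t ^ α = 9 * ε / |X| + 1 := Real.rpow_inv_rpow hbase.le hα.ne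
      have hb := hbound t ht0
      rw [htα] at hb
      have hcalc : (9 * ε / |X| + 1) * |X| = 9 * ε + |X| := by
        field_simp
      linarith
    linarith
  refine ⟨key, ?_⟩
  intro u hu
  have e1 := key u 2 hu two_pos
  have e2 := key 2 u two_pos hu
  rw [mul_comm (2 : ℝ) u] at e2
  have hswap : g u * ((2 : ℝ) ^ α - 1) = g 2 * (u ^ α - 1) := by linarith
  have hlt : (2 : ℝ) ^ α < 1 := Real.rpow_lt_one_of_one_lt_of_neg one_lt_two hα
  have hne : (2 : ℝ) ^ α - 1 ≠ 0 := by linarith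
  field_simp
  linear_combination hswap
end

section
/- Let ε ≥ 0 and let g : (0,∞) → ℝ satisfy |g(tv) - g(v) - g(t)| ≤ 6ε for all t, v > 0. Then there exists a logarithmic function l : (0,∞) → ℝ (l(uv) = l(u) + l(v)) such that |g(u) - l(u)| ≤ 6ε for all u > 0. -/
open Filter Topology

theorem stmt6 (ε : ℝ) (hε : 0 ≤ ε) (g : ℝ → ℝ)
    (h : ∀ t v : ℝ, 0 < t → 0 < v → |g (t * v) - g v - g t| ≤ 6 * ε) :
    ∃ l : ℝ → ℝ, (∀ u v : ℝ, 0 < u → 0 < v → l (u * v) = l u + l v) ∧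
      ∀ u : ℝ, 0 < u → |g u - l u| ≤ 6 * ε := by
  set C := 6 * ε with hC
  have hC0 : 0 ≤ C := by positivity
  set f : ℝ → ℝ := fun x => g (Real.exp x) with hf
  have hfa : ∀ x y : ℝ, |f (x + y) - f x - f y| ≤ C := by
    intro x y
    have := h (Real.exp x) (Real.exp y) (Real.exp_pos x) (Real.exp_pos y)
    simpa [hf, ← Real.exp_add, sub_sub, add_comm] using this
  -- the approximating sequence
  set a : ℝ → ℕ → ℝ := fun x n => f (2 ^ n * x) / 2 ^ n with ha
  have hstep : ∀ x n, dist (a x n) (a x (n + 1)) ≤ (C / 2) * (1 / 2) ^ n := by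
    intro x n
    have h2 : (0:ℝ) < 2 ^ n := by positivity
    have key := hfa (2 ^ n * x) (2 ^ n * x)
    have h2x : (2:ℝ) ^ (n+1) * x = 2 ^ n * x + 2 ^ n * x := by ring
    rw [Real.dist_eq, ha]
    have : f (2 ^ n * x) / 2 ^ n - f (2 ^ (n+1) * x) / 2 ^ (n+1)
        = -(f (2 ^ n * x + 2 ^ n * x) - f (2 ^ n * x) - f (2 ^ n * x)) / 2 ^ (n+1) := by
      rw [h2x]; field_simp; ring
    rw [this, abs_div, abs_neg, abs_of_pos (by positivity : (0:ℝ) < 2 ^ (n+1))]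
    rw [div_le_iff₀ (by positivity)]
    calc |f (2 ^ n * x + 2 ^ n * x) - f (2 ^ n * x) - f (2 ^ n * x)| ≤ C := key
      _ ≤ C / 2 * (1 / 2) ^ n * 2 ^ (n + 1) := by
          rw [pow_succ]
          have : C / 2 * (1/2:ℝ) ^ n * (2 ^ n * 2) = C := by
            field_simp; rw [mul_assoc, ← mul_pow]; norm_num
          rw [this]
  have hcauchy : ∀ x, CauchySeq (a x) := fun x =>
    cauchySeq_of_le_geometric (1/2) (C/2) (by norm_num) (hstep x)
  set l' : ℝ → ℝ := fun x => limUnder atTop (a x) with hl'def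
  have hl' : ∀ x, Tendsto (a x) atTop (𝓝 (l' x)) := fun x => (hcauchy x).tendsto_limUnder
  -- distance bound
  have hdist : ∀ x, |f x - l' x| ≤ C := by
    intro x
    have := dist_le_of_le_geometric_of_tendsto (1/2) (C/2) (by norm_num) (hstep x) (hl' x) 0
    have ha0 : a x 0 = f x := by simp [ha]
    rw [ha0] at this
    calc |f x - l' x| = dist (f x) (l' x) := (Real.dist_eq _ _).symm
      _ ≤ C / 2 * (1/2) ^ 0 / (1 - 1/2) := this
      _ = C := by rw [pow_zero, mul_one]; ring
  -- additivity of l'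
  have hladd : ∀ x y : ℝ, l' (x + y) = l' x + l' y := by
    intro x y
    have htend : Tendsto (fun n => a (x+y) n - a x n - a y n) atTop
        (𝓝 (l' (x+y) - l' x - l' y)) := ((hl' (x+y)).sub (hl' x)).sub (hl' y)
    have hbound : ∀ n, ‖a (x+y) n - a x n - a y n‖ ≤ C * (1/2) ^ n := by
      intro n
      have h2 : (0:ℝ) < 2 ^ n := by positivity
      have key := hfa (2 ^ n * x) (2 ^ n * y)
      have : a (x+y) n - a x n - a y n
          = (f (2 ^ n * x + 2 ^ n * y) - f (2 ^ n * x) - f (2 ^ n * y)) / 2 ^ n := by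
        simp only [ha, mul_add]; ring
      rw [this, Real.norm_eq_abs, abs_div, abs_of_pos h2, div_le_iff₀ h2]
      calc |f (2 ^ n * x + 2 ^ n * y) - f (2 ^ n * x) - f (2 ^ n * y)| ≤ C := key
        _ ≤ C * (1/2) ^ n * 2 ^ n := by
            have : C * (1/2:ℝ) ^ n * 2 ^ n = C := by
              rw [mul_assoc, ← mul_pow]; norm_num
            rw [this]
    have hzero : Tendsto (fun n => a (x+y) n - a x n - a y n) atTop (𝓝 0) := by
      apply squeeze_zero_norm hbound
      have := tendsto_pow_atTop_nhds_zero_of_lt_one (by norm_num : (0:ℝ) ≤ 1/2)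
        (by norm_num : (1/2:ℝ) < 1)
      simpa using this.const_mul C
    have := tendsto_nhds_unique htend hzero
    linarith
  refine ⟨fun u => l' (Real.log u), ?_, ?_⟩
  · intro u v hu hv
    simp only []
    rw [Real.log_mul hu.ne' hv.ne', hladd]
  · intro u hu
    have : g u = f (Real.log u) := by rw [hf]; simp [Real.exp_log hu]
    rw [this]; exact hdist _
end

section
/- Let α < 0 and f₀ : (0,1) → ℝ. Define F₀(p,q) = f₀(p) + p^α f₀(q) - f₀(pq) - (1-pq)^α f₀((1-p)/(1-pq)) for p, q ∈ (0,1). Then the identity f₀(p)(q^α + (1-q)^α - 1) - f₀(q)(p^α + (1-p)^α - 1) = F₀(q,p) - F₀(p,q) + (1-pq)^α [F₀((1-q)/(1-pq), p) + f₀(1 - (1-p)/(1-pq)) - f₀((1-p)/(1-pq))] holds for all p, q ∈ (0,1). -/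
theorem stmt8 (α : ℝ) (hα : α < 0) (f₀ : ℝ → ℝ)
    (F₀ : ℝ → ℝ → ℝ)
    (hF₀ : ∀ p q : ℝ, 0 < p → p < 1 → 0 < q → q < 1 →
      F₀ p q = f₀ p + p ^ α * f₀ q - f₀ (p * q) -
        (1 - p * q) ^ α * f₀ ((1 - p) / (1 - p * q))) :
    ∀ p q : ℝ, 0 < p → p < 1 → 0 < q → q < 1 →
      f₀ p * (q ^ α + (1 - q) ^ α - 1) - f₀ q * (p ^ α + (1 - p) ^ α - 1) =
        F₀ q p - F₀ p q + (1 - p * q) ^ α *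
          (F₀ ((1 - q) / (1 - p * q)) p +
            f₀ (1 - (1 - p) / (1 - p * q)) - f₀ ((1 - p) / (1 - p * q))) := by
  intro p q hp hp1 hq hq1
  have hpq1 : p * q < 1 := by nlinarith
  have hd : (0:ℝ) < 1 - p * q := by linarith
  have hqlt : 1 - q < 1 - p * q := by nlinarith
  have hplt : 1 - p < 1 - p * q := by nlinarith
  have hr0 : 0 < (1 - q) / (1 - p * q) := div_pos (by linarith) hd
  have hr1 : (1 - q) / (1 - p * q) < 1 := (div_lt_one hd).2 hqlt
  have e1 : 1 - (1 - q) / (1 - p * q) * p = (1 - p) / (1 - p * q) := by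
    rw [div_mul_eq_mul_div, one_sub_div hd.ne']; ring_nf
  have e2 : (1 - (1 - q) / (1 - p * q)) / ((1 - p) / (1 - p * q)) = q := by
    rw [div_eq_iff (ne_of_gt (div_pos (by linarith) hd))]
    rw [one_sub_div hd.ne', mul_div_assoc']
    ring_nf
  have e3 : (1 - q) / (1 - p * q) * p = 1 - (1 - p) / (1 - p * q) := by
    rw [div_mul_eq_mul_div, one_sub_div hd.ne']; ring_nf
  rw [hF₀ p q hp hp1 hq hq1, hF₀ q p hq hq1 hp hp1,
    hF₀ _ p hr0 hr1 hp hp1, e1, e2, e3, mul_comm q p]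
  have rq : (1 - p * q) ^ α * ((1 - q) / (1 - p * q)) ^ α = (1 - q) ^ α := by
    rw [Real.div_rpow (by linarith) hd.le]
    field_simp
  have rp : (1 - p * q) ^ α * ((1 - p) / (1 - p * q)) ^ α = (1 - p) ^ α := by
    rw [Real.div_rpow (by linarith) hd.le]
    field_simp
  linear_combination f₀ q * rp - f₀ p * rq
end

section
/- Let α < 0 and let f : (0,1) → ℝ satisfy f(x) + (1-x)^α f(y/(1-x)) = f(y) + (1-y)^α f(x/(1-y)) for all x, y ∈ (0,1) with x + y < 1. Then there exist a, b ∈ ℝ such that f(x) = a x^α + b(1-x)^α - b for all x ∈ (0,1). -/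
theorem stmt10 (α : ℝ) (hα : α < 0) (f : ℝ → ℝ)
    (h : ∀ x y : ℝ, 0 < x → 0 < y → x + y < 1 →
      f x + (1 - x) ^ α * f (y / (1 - x)) = f y + (1 - y) ^ α * f (x / (1 - y))) :
    ∃ a b : ℝ, ∀ x : ℝ, 0 < x → x < 1 →
      f x = a * x ^ α + b * (1 - x) ^ α - b := by
  obtain ⟨g, hgdef⟩ : ∃ g : ℝ → ℝ → ℝ, ∀ p q, g p q = (p+q)^α * f (p/(p+q)) :=
    ⟨_, fun _ _ => rfl⟩
  -- the homogenized equation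
  have hg1 : ∀ p q r : ℝ, 0 < p → 0 < q → 0 < r →
      g p (q+r) + g q r = g q (p+r) + g p r := by
    intro p q r hp hq hr
    have hs : (0:ℝ) < p + q + r := by linarith
    have hqr : (0:ℝ) < q + r := by linarith
    have hpr : (0:ℝ) < p + r := by linarith
    have hxy := h (p/(p+q+r)) (q/(p+q+r)) (by positivity) (by positivity)
      (by rw [← add_div, div_lt_one hs]; linarith)
    have e1 : 1 - p/(p+q+r) = (q+r)/(p+q+r) := by field_simp; ring
    have e2 : 1 - q/(p+q+r) = (p+r)/(p+q+r) := by field_simp; ring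
    rw [e1, e2] at hxy
    have e3 : (q/(p+q+r))/((q+r)/(p+q+r)) = q/(q+r) := by
      rw [div_div_div_cancel_right₀] ; exact hs.ne'
    have e4 : (p/(p+q+r))/((p+r)/(p+q+r)) = p/(p+r) := by
      rw [div_div_div_cancel_right₀] ; exact hs.ne'
    rw [e3, e4, Real.div_rpow hqr.le hs.le, Real.div_rpow hpr.le hs.le] at hxy
    have hsα : (0:ℝ) < (p+q+r)^α := Real.rpow_pos_of_pos hs α
    rw [hgdef, hgdef, hgdef, hgdef,
      show p+(q+r) = p+q+r by ring, show q+(p+r) = p+q+r by ring]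
    field_simp at hxy
    linear_combination hxy
  -- homogeneity
  have hg2 : ∀ l p q : ℝ, 0 < l → 0 < p → 0 < q → g (l*p) (l*q) = l^α * g p q := by
    intro l p q hl hp hq
    have hpq : (0:ℝ) < p + q := by linarith
    rw [hgdef, hgdef, show l*p + l*q = l*(p+q) by ring,
      Real.mul_rpow hl.le hpq.le, mul_div_mul_left _ _ hl.ne', mul_assoc]
  -- cocycle for the skew part
  have hcocy : ∀ p q r : ℝ, 0 < p → 0 < q → 0 < r →
      g q r - g r q = (g q p - g p q) + (g p r - g r p) := by
    intro p q r hp hq hr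
    have i := hg1 p q r hp hq hr
    have ii := hg1 p r q hp hr hq
    have iii := hg1 q r p hq hr hp
    rw [add_comm r q] at ii
    rw [add_comm r p, add_comm q p] at iii
    linarith
  obtain ⟨γ, hγdef⟩ : ∃ γ : ℝ → ℝ, ∀ p, γ p = g p 1 - g 1 p := ⟨_, fun _ => rfl⟩
  have hγ : ∀ p q : ℝ, 0 < p → 0 < q → g p q - g q p = γ p - γ q := by
    intro p q hp hq
    have := hcocy 1 p q one_pos hp hq
    rw [hγdef, hγdef]; linarith
  -- homogeneity of γ-differences
  have hγmul : ∀ l p : ℝ, 0 < l → 0 < p → γ (l*p) = γ l + l^α * γ p := by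
    intro l p hl hp
    have h1 := hg2 l p 1 hl hp one_pos
    have h2 := hg2 l 1 p hl one_pos hp
    have h3 := hγ (l*p) (l*1) (by positivity) (by positivity)
    rw [mul_one] at h3 h1 h2
    have h4 := hγ p 1 hp one_pos
    rw [hγdef 1, sub_self] at h4
    have h5 := hγdef p
    linear_combination h1 - h2 - h3 - l^α * h5
  have h2α : (2:ℝ)^α < 1 := Real.rpow_lt_one_of_one_lt_of_neg one_lt_two hα
  set c₀ : ℝ := γ 2 / (1 - 2^α) with hc₀
  have hγform : ∀ p : ℝ, 0 < p → γ p = c₀ * (1 - p^α) := by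
    intro p hp
    have h1 := hγmul 2 p two_pos hp
    have h2 := hγmul p 2 hp two_pos
    rw [mul_comm] at h2
    have hne : (1:ℝ) - 2^α ≠ 0 := by linarith
    rw [hc₀]
    field_simp
    linarith [h1, h2]
  -- symmetrized function
  obtain ⟨G, hGdef⟩ : ∃ G : ℝ → ℝ → ℝ, ∀ p q, G p q = g p q - c₀*(q^α - (p+q)^α) :=
    ⟨_, fun _ _ => rfl⟩
  have hGsym : ∀ p q : ℝ, 0 < p → 0 < q → G p q = G q p := by
    intro p q hp hq
    rw [hGdef, hGdef, add_comm q p]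
    have h1 := hγ p q hp hq
    have h2 := hγform p hp
    have h3 := hγform q hq
    linear_combination h1 + h2 - h3
  have hG1 : ∀ p q r : ℝ, 0 < p → 0 < q → 0 < r →
      G p (q+r) + G q r = G q (p+r) + G p r := by
    intro p q r hp hq hr
    rw [hGdef, hGdef, hGdef, hGdef,
      show p+(q+r) = p+q+r by ring, show q+(p+r) = p+q+r by ring]
    linear_combination hg1 p q r hp hq hr
  have hGrec : ∀ x y z : ℝ, 0 < x → 0 < y → 0 < z →
      G x (y+z) + G y z = G (x+y) z + G x y := by
    intro x y z hx hy hz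
    have := hG1 x z y hx hz hy
    rw [add_comm z y] at this
    rw [hGsym y z hy hz, ← hGsym z (x+y) hz (by linarith)] at *
    linarith [this]
  have hGhom : ∀ l p q : ℝ, 0 < l → 0 < p → 0 < q → G (l*p) (l*q) = l^α * G p q := by
    intro l p q hl hp hq
    rw [hGdef, hGdef, Real.mul_rpow hl.le hq.le,
      show l*p + l*q = l*(p+q) by ring, Real.mul_rpow hl.le (by positivity)]
    linear_combination hg2 l p q hl hp hq
  -- key constant
  have hhalf : (1:ℝ) < (1/2:ℝ)^α := by
    rw [Real.one_lt_rpow_iff_of_pos (by norm_num)]; right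
    constructor <;> [norm_num; exact hα]
  set K : ℝ := G (1/2) (1/2) with hK
  set lam : ℝ := K / (2*(1/2:ℝ)^α - 1) with hlam
  refine ⟨lam, lam + c₀, ?_⟩
  intro x hx0 hx1
  have hy0 : (0:ℝ) < 1 - x := by linarith
  have hu : (0:ℝ) < x/2 := by linarith
  have hv : (0:ℝ) < (1-x)/2 := by linarith
  -- 2x2 product identity
  have A := hG1 (x/2) ((1-x)/2) ((1-x)/2) hu hv hv
  have B := hGrec (x/2) (x/2) ((1-x)/2 + (1-x)/2) hu hu (by linarith)
  have C := hGrec (x/2) ((1-x)/2) (x/2 + (1-x)/2) hu hv (by linarith)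
  rw [show (1-x)/2 + (1-x)/2 = 1-x by ring] at A B
  rw [show x/2 + (1-x)/2 = 1/2 by ring] at A C
  rw [show x/2 + (1-x) = 1 - x/2 by ring, show x/2 + x/2 = x by ring] at B
  rw [show (1-x)/2 + 1/2 = 1 - x/2 by ring] at C
  -- homogeneity rewrites
  have e7 : G (x/2) (x/2) = x^α * K := by
    rw [hK, show x/2 = x*(1/2) by ring]; exact hGhom x (1/2) (1/2) hx0 (by norm_num) (by norm_num)
  have e3 : G ((1-x)/2) ((1-x)/2) = (1-x)^α * K := by
    rw [hK, show (1-x)/2 = (1-x)*(1/2) by ring]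
    exact hGhom (1-x) (1/2) (1/2) hy0 (by norm_num) (by norm_num)
  have e5 : G (x/2) ((1-x)/2) = (1/2:ℝ)^α * G x (1-x) := by
    rw [show x/2 = (1/2)*x by ring, show (1-x)/2 = (1/2)*(1-x) by ring]
    exact hGhom (1/2) x (1-x) (by norm_num) hx0 hy0
  -- combine: G x (1-x) + x^α K + (1-x)^α K = K + 2 * (1/2)^α * G x (1-x)
  have key : G x (1-x) * (1 - 2*(1/2:ℝ)^α) = K * (1 - x^α - (1-x)^α) := by
    nlinarith [A, B, C, e7, e3, e5]
  -- unfold G x (1-x) back to f x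
  have hgx : g x (1-x) = f x := by
    rw [hgdef, show x + (1-x) = 1 by ring, Real.one_rpow, div_one, one_mul]
  have hGx : G x (1-x) = f x - c₀*((1-x)^α - 1) := by
    rw [hGdef, hgx, show x + (1-x) = 1 by ring, Real.one_rpow]
  have hden : 2*(1/2:ℝ)^α - 1 ≠ 0 := by nlinarith
  rw [hGx] at key
  rw [hlam]
  field_simp
  linear_combination (-1 : ℝ) * key
end

section
/- Let α < 0, ε ≥ 0, and let f : [0,1] → ℝ satisfy |f(x) + (1-x)^α f(y/(1-x)) - f(y) - (1-y)^α f(x/(1-y))| ≤ ε for all x, y ∈ [0,1) with x + y ≤ 1. Suppose a, b ∈ ℝ are such that |f(x) - (a x^α + b(1-x)^α - b)| ≤ 15ε for all x ∈ (0,1). Then f(1) = a - b. -/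
theorem stmt13 (α ε : ℝ) (hα : α < 0) (hε : 0 ≤ ε) (f : ℝ → ℝ)
    (h : ∀ x y : ℝ, 0 ≤ x → x < 1 → 0 ≤ y → y < 1 → x + y ≤ 1 →
      |f x + (1 - x) ^ α * f (y / (1 - x)) - f y - (1 - y) ^ α * f (x / (1 - y))| ≤ ε)
    (a b : ℝ)
    (hab : ∀ x : ℝ, 0 < x → x < 1 →
      |f x - (a * x ^ α + b * (1 - x) ^ α - b)| ≤ 15 * ε) :
    f 1 = a - b := by
  have key : ∀ x : ℝ, 0 < x → x < 1 →
      |(a - b - f 1) * (x ^ α - (1 - x) ^ α)| ≤ 31 * ε := by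
    intro x hx hx1
    have h1 := h x (1 - x) hx.le hx1 (by linarith) (by linarith) (by linarith)
    rw [show (1 - x) / (1 - x) = 1 from div_self (by linarith),
        show 1 - (1 - x) = x from by ring, div_self (ne_of_gt hx)] at h1
    have h2 := hab x hx hx1
    have h3 := hab (1 - x) (by linarith) (by linarith)
    rw [show 1 - (1 - x) = x from by ring] at h3
    rw [abs_le] at h1 h2 h3 ⊢
    constructor <;> nlinarith [h1.1, h1.2, h2.1, h2.2, h3.1, h3.2]
  by_contra hc
  set c : ℝ := a - b - f 1 with hcdef
  have hc' : c ≠ 0 := by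
    intro h0
    apply hc
    linarith [h0.symm ▸ (rfl : c = a - b - f 1)]
  have hcpos : 0 < |c| := abs_pos.mpr hc'
  set M : ℝ := 31 * ε / |c| + (1 / 2 : ℝ) ^ α + 1 with hM
  set K : ℝ := max M 1 with hK
  have hK1 : (1 : ℝ) ≤ K := le_max_right _ _
  have hKpos : (0 : ℝ) < K := by linarith
  have hKM : M ≤ K := le_max_left _ _
  set t : ℝ := min (K ^ (1 / α)) (1 / 2) with ht
  have htpos : 0 < t := lt_min (Real.rpow_pos_of_pos hKpos _) (by norm_num)
  have ht12 : t ≤ 1 / 2 := min_le_right _ _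
  have ht1 : t < 1 := by linarith
  -- t ^ α ≥ K
  have h4 : (K ^ (1 / α)) ^ α = K := by
    rw [← Real.rpow_mul hKpos.le, one_div_mul_cancel (ne_of_lt hα), Real.rpow_one]
  have h5 : K ≤ t ^ α := by
    rw [← h4]
    exact Real.rpow_le_rpow_of_nonpos htpos (min_le_left _ _) hα.le
  -- (1 - t) ^ α ≤ (1/2) ^ α
  have h6 : (1 - t) ^ α ≤ (1 / 2 : ℝ) ^ α :=
    Real.rpow_le_rpow_of_nonpos (by norm_num) (by linarith) hα.le
  have hD : 31 * ε / |c| + 1 ≤ t ^ α - (1 - t) ^ α := by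
    have : M ≤ t ^ α := le_trans hKM h5
    rw [hM] at this
    linarith
  have hkey := key t htpos ht1
  rw [abs_mul] at hkey
  have hdiv : |c| * (31 * ε / |c|) = 31 * ε := by
    field_simp
  have hDpos : 0 ≤ t ^ α - (1 - t) ^ α := by
    have hd : 0 ≤ 31 * ε / |c| := div_nonneg (by linarith) hcpos.le
    linarith
  rw [abs_of_nonneg hDpos] at hkey
  nlinarith [mul_le_mul_of_nonneg_left hD hcpos.le]
end

section
/- Let α < 0, ε ≥ 0, and f : [0,1] → ℝ satisfy |f(x) + (1-x)^α f(y/(1-x)) - f(y) - (1-y)^α f(x/(1-y))| ≤ ε for all x, y ∈ [0,1) with x + y ≤ 1. Then there exist a, b ∈ ℝ such that the function h₁ with h₁(0) = 0, h₁(x) = a x^α + b(1-x)^α - b for x ∈ (0,1), h₁(1) = a - b, satisfies the parametric fundamental equation of information exactly on D, and |f(x) - h₁(x)| ≤ 15ε for all x ∈ [0,1]. -/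
/-- The defect of the parametric fundamental equation of information. -/
private noncomputable def Fd (α : ℝ) (f : ℝ → ℝ) (x y : ℝ) : ℝ :=
  f x + (1 - x) ^ α * f (y / (1 - x)) - f y - (1 - y) ^ α * f (x / (1 - y))

/-- If |c| ≤ C * t^β for all small positive t and β > 0, then c = 0. -/
private lemma vanish (β : ℝ) (hβ : 0 < β) (c C : ℝ)
    (h : ∀ t : ℝ, 0 < t → t ≤ 1/2 → |c| ≤ C * t ^ β) : c = 0 := by
  by_contra hc
  have hc' : 0 < |c| := abs_pos.mpr hc
  have hC : 0 < C := by
    have h1 := h (1/2) (by norm_num) le_rfl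
    have h2 : (0:ℝ) < (1/2:ℝ) ^ β := Real.rpow_pos_of_pos (by norm_num) β
    nlinarith
  have hpos : (0:ℝ) < |c| / (2*C) := by positivity
  set t := min (1/2) ((|c| / (2*C)) ^ (1/β)) with ht
  have htpos : 0 < t := lt_min (by norm_num) (Real.rpow_pos_of_pos hpos _)
  have hthalf : t ≤ 1/2 := min_le_left _ _
  have h2 : t ^ β ≤ |c| / (2*C) := by
    have h3 : t ≤ (|c| / (2*C)) ^ (1/β) := min_le_right _ _
    calc t ^ β ≤ ((|c| / (2*C)) ^ (1/β)) ^ β :=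
          Real.rpow_le_rpow htpos.le h3 hβ.le
      _ = |c|/(2*C) := by
          rw [← Real.rpow_mul hpos.le, one_div_mul_cancel hβ.ne', Real.rpow_one]
  have h5 := h t htpos hthalf
  have h6 : C * t ^ β ≤ C * (|c| / (2*C)) := mul_le_mul_of_nonneg_left h2 hC.le
  have h7 : C * (|c| / (2*C)) = |c| / 2 := by field_simp
  rw [h7] at h6
  linarith

/-- Scaling normalization of the defect. -/
private lemma Fd_scaled (α : ℝ) (f : ℝ → ℝ) (m u v mu mv : ℝ) (hm : 0 < m)
    (hmu : mu = m - u) (hmv : mv = m - v) (hmu0 : 0 < mu) (hmv0 : 0 < mv) :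
    m ^ α * Fd α f (u/m) (v/m)
      = m ^ α * f (u/m) + mu ^ α * f (v/mu) - m ^ α * f (v/m) - mv ^ α * f (u/mv) := by
  subst hmu hmv
  have hm' : m ≠ 0 := hm.ne'
  have hmu' : m - u ≠ 0 := hmu0.ne'
  have hmv' : m - v ≠ 0 := hmv0.ne'
  have e1 : 1 - u/m = (m-u)/m := by field_simp
  have e2 : 1 - v/m = (m-v)/m := by field_simp
  have e3 : v/m/((m-u)/m) = v/(m-u) := div_div_div_cancel_right₀ hm' v (m-u)
  have e4 : u/m/((m-v)/m) = u/(m-v) := div_div_div_cancel_right₀ hm' u (m-v)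
  have e5 : m ^ α * ((m-u)/m) ^ α = (m-u) ^ α := by
    rw [← Real.mul_rpow hm.le (by positivity)]
    congr 1
    field_simp
  have e6 : m ^ α * ((m-v)/m) ^ α = (m-v) ^ α := by
    rw [← Real.mul_rpow hm.le (by positivity)]
    congr 1
    field_simp
  simp only [Fd]
  rw [e1, e2, e3, e4]
  linear_combination f (v/(m-u)) * e5 - f (u/(m-v)) * e6

set_option maxHeartbeats 1600000 in
theorem stmt14 (α ε : ℝ) (hα : α < 0) (hε : 0 ≤ ε) (f : ℝ → ℝ)
    (h : ∀ x y : ℝ, 0 ≤ x → x < 1 → 0 ≤ y → y < 1 → x + y ≤ 1 →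
      |f x + (1 - x) ^ α * f (y / (1 - x)) - f y - (1 - y) ^ α * f (x / (1 - y))| ≤ ε) :
    ∃ (a b : ℝ) (h₁ : ℝ → ℝ),
      h₁ 0 = 0 ∧
      (∀ x : ℝ, 0 < x → x < 1 → h₁ x = a * x ^ α + b * (1 - x) ^ α - b) ∧
      h₁ 1 = a - b ∧
      (∀ x y : ℝ, 0 ≤ x → x < 1 → 0 ≤ y → y < 1 → x + y ≤ 1 →
        h₁ x + (1 - x) ^ α * h₁ (y / (1 - x)) = h₁ y + (1 - y) ^ α * h₁ (x / (1 - y))) ∧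
      ∀ x : ℝ, 0 ≤ x → x ≤ 1 → |f x - h₁ x| ≤ 15 * ε := by
  have hα0 : α ≠ 0 := hα.ne
  -- Step 0 : f 0 = 0
  have f0 : f 0 = 0 := by
    by_contra hf0
    have habs : 0 < |f 0| := abs_pos.mpr hf0
    set K : ℝ := ε / |f 0| + 2 with hK
    have hK1 : (1:ℝ) < K := by
      rw [hK]
      have : 0 ≤ ε / |f 0| := div_nonneg hε habs.le
      linarith
    set s : ℝ := K ^ (1/α) with hs
    have hs0 : 0 < s := Real.rpow_pos_of_pos (by linarith) _
    have hs1 : s < 1 := Real.rpow_lt_one_of_one_lt_of_neg hK1 (by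
      rw [one_div]; exact inv_neg''.mpr hα)
    have hsα : s ^ α = K := by
      rw [hs, ← Real.rpow_mul (by linarith : (0:ℝ) ≤ K), one_div_mul_cancel hα0,
        Real.rpow_one]
    have hinst := h (1 - s) 0 (by linarith) (by linarith) le_rfl (by norm_num) (by linarith)
    rw [show (1:ℝ) - (1-s) = s from by ring] at hinst
    simp only [zero_div, sub_zero, Real.one_rpow, one_mul, div_one] at hinst
    rw [hsα] at hinst
    have heq : f (1-s) + K * f 0 - f 0 - f (1-s) = f 0 * (K-1) := by ring
    rw [heq, abs_mul, abs_of_pos (by linarith : (0:ℝ) < K - 1)] at hinst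
    have : |f 0| * (K - 1) = ε + |f 0| := by
      rw [hK]
      field_simp
      ring
    rw [this] at hinst
    linarith
  -- Step 1 : the defect vanishes identically on the interior
  have hFeq : ∀ p q : ℝ, 0 < p → p < 1 → 0 < q → q < 1 → p + q ≤ 1 → Fd α f p q = 0 := by
    intro p q hp hp1 hq hq1 hpq
    apply vanish (-α) (by linarith) _ ((3 + 2*(1/2:ℝ)^α)*ε)
    intro t ht ht2
    set x : ℝ := 1 - t with hxdef
    have h1xt : (1:ℝ) - x = t := by rw [hxdef]; ring
    have hx5 : (1/2:ℝ) ≤ x := by rw [hxdef]; linarith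
    have hx0 : 0 < x := by linarith
    have hx1 : x < 1 := by rw [hxdef]; linarith
    have h1xpos : (0:ℝ) < 1 - x := by linarith
    set y : ℝ := p * (1-x) with hydef
    set z : ℝ := q * (1-x) with hzdef
    have hy0 : 0 < y := mul_pos hp h1xpos
    have hz0 : 0 < z := mul_pos hq h1xpos
    have hyx : y < 1 - x := by rw [hydef]; nlinarith
    have hzx : z < 1 - x := by rw [hzdef]; nlinarith
    have hyz : y + z ≤ 1 - x := by rw [hydef, hzdef]; nlinarith
    have hy2 : y ≤ 1/2 := by linarith
    have hz2 : z ≤ 1/2 := by linarith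
    have h1y : (0:ℝ) < 1 - y := by linarith
    have h1z : (0:ℝ) < 1 - z := by linarith
    have mxy : (0:ℝ) < 1 - x - y := by linarith
    have mxz : (0:ℝ) < 1 - x - z := by linarith
    have myz : (0:ℝ) < 1 - y - z := by linarith
    have hxyz : x + y + z ≤ 1 := by linarith
    -- the three scaled instances
    have I0 := Fd_scaled α f (1-x) y z (1-x-y) (1-x-z) h1xpos (by ring) (by ring) mxy mxz
    have I2 := Fd_scaled α f (1-y) x z (1-x-y) (1-y-z) h1y (by ring) (by ring) mxy myz
    have I4 := Fd_scaled α f (1-z) y x (1-y-z) (1-x-z) h1z (by ring) (by ring) myz mxz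
    have hp' : y/(1-x) = p := by rw [hydef, mul_div_cancel_right₀ _ h1xpos.ne']
    have hq' : z/(1-x) = q := by rw [hzdef, mul_div_cancel_right₀ _ h1xpos.ne']
    have hIdent : (1-x)^α * Fd α f p q
        = Fd α f x y + (1-y)^α * Fd α f (x/(1-y)) (z/(1-y)) + Fd α f y z
          + (1-z)^α * Fd α f (y/(1-z)) (x/(1-z)) + Fd α f z x := by
      rw [← hp', ← hq', I0, I2, I4]
      simp only [Fd]
      ring
    -- bounds on the five instances
    have B1 : |Fd α f x y| ≤ ε := by
      have := h x y hx0.le hx1 hy0.le (by linarith) (by linarith)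
      simpa [Fd] using this
    have B2 : |Fd α f (x/(1-y)) (z/(1-y))| ≤ ε := by
      have d1 : x/(1-y) < 1 := (div_lt_one h1y).mpr (by linarith)
      have d2 : z/(1-y) < 1 := (div_lt_one h1y).mpr (by linarith)
      have d3 : x/(1-y) + z/(1-y) ≤ 1 := by
        rw [← add_div, div_le_one h1y]; linarith
      have := h (x/(1-y)) (z/(1-y)) (by positivity) d1 (by positivity) d2 d3
      simpa [Fd] using this
    have B3 : |Fd α f y z| ≤ ε := by
      have := h y z hy0.le (by linarith) hz0.le (by linarith) (by linarith)
      simpa [Fd] using this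
    have B4 : |Fd α f (y/(1-z)) (x/(1-z))| ≤ ε := by
      have d1 : y/(1-z) < 1 := (div_lt_one h1z).mpr (by linarith)
      have d2 : x/(1-z) < 1 := (div_lt_one h1z).mpr (by linarith)
      have d3 : y/(1-z) + x/(1-z) ≤ 1 := by
        rw [← add_div, div_le_one h1z]; linarith
      have := h (y/(1-z)) (x/(1-z)) (by positivity) d1 (by positivity) d2 d3
      simpa [Fd] using this
    have B5 : |Fd α f z x| ≤ ε := by
      have := h z x hz0.le (by linarith) hx0.le hx1 (by linarith)
      simpa [Fd] using this
    have hhalfpos : (0:ℝ) < (1/2:ℝ)^α := Real.rpow_pos_of_pos (by norm_num) α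
    have hcy : (1-y)^α ≤ (1/2:ℝ)^α :=
      Real.rpow_le_rpow_of_nonpos (by norm_num) (by linarith) hα.le
    have hcz : (1-z)^α ≤ (1/2:ℝ)^α :=
      Real.rpow_le_rpow_of_nonpos (by norm_num) (by linarith) hα.le
    have hycoef : 0 < (1-y)^α := Real.rpow_pos_of_pos h1y α
    have hzcoef : 0 < (1-z)^α := Real.rpow_pos_of_pos h1z α
    have e2' : |(1-y)^α * Fd α f (x/(1-y)) (z/(1-y))| ≤ (1/2:ℝ)^α * ε := by
      rw [abs_mul, abs_of_pos hycoef]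
      exact mul_le_mul hcy B2 (abs_nonneg _) hhalfpos.le
    have e4' : |(1-z)^α * Fd α f (y/(1-z)) (x/(1-z))| ≤ (1/2:ℝ)^α * ε := by
      rw [abs_mul, abs_of_pos hzcoef]
      exact mul_le_mul hcz B4 (abs_nonneg _) hhalfpos.le
    have hT : |(1-x)^α * Fd α f p q| ≤ (3 + 2*(1/2:ℝ)^α)*ε := by
      rw [hIdent]
      calc |Fd α f x y + (1-y)^α * Fd α f (x/(1-y)) (z/(1-y)) + Fd α f y z
              + (1-z)^α * Fd α f (y/(1-z)) (x/(1-z)) + Fd α f z x|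
          ≤ |Fd α f x y + (1-y)^α * Fd α f (x/(1-y)) (z/(1-y)) + Fd α f y z
              + (1-z)^α * Fd α f (y/(1-z)) (x/(1-z))| + |Fd α f z x| := abs_add_le _ _
        _ ≤ |Fd α f x y + (1-y)^α * Fd α f (x/(1-y)) (z/(1-y)) + Fd α f y z|
              + |(1-z)^α * Fd α f (y/(1-z)) (x/(1-z))| + |Fd α f z x| := by
            have := abs_add_le (Fd α f x y + (1-y)^α * Fd α f (x/(1-y)) (z/(1-y)) + Fd α f y z)
              ((1-z)^α * Fd α f (y/(1-z)) (x/(1-z)))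
            linarith
        _ ≤ |Fd α f x y + (1-y)^α * Fd α f (x/(1-y)) (z/(1-y))| + |Fd α f y z|
              + |(1-z)^α * Fd α f (y/(1-z)) (x/(1-z))| + |Fd α f z x| := by
            have := abs_add_le (Fd α f x y + (1-y)^α * Fd α f (x/(1-y)) (z/(1-y))) (Fd α f y z)
            linarith
        _ ≤ |Fd α f x y| + |(1-y)^α * Fd α f (x/(1-y)) (z/(1-y))| + |Fd α f y z|
              + |(1-z)^α * Fd α f (y/(1-z)) (x/(1-z))| + |Fd α f z x| := by
            have := abs_add_le (Fd α f x y) ((1-y)^α * Fd α f (x/(1-y)) (z/(1-y)))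
            linarith
        _ ≤ ε + (1/2:ℝ)^α * ε + ε + (1/2:ℝ)^α * ε + ε := by linarith
        _ = (3 + 2*(1/2:ℝ)^α)*ε := by ring
    have hpow : 0 < (1-x)^α := Real.rpow_pos_of_pos h1xpos α
    have hfin : |Fd α f p q| ≤ ((3 + 2*(1/2:ℝ)^α)*ε) * t^(-α) := by
      rw [abs_mul, abs_of_pos hpow] at hT
      calc |Fd α f p q| = ((1-x)^α * |Fd α f p q|) / (1-x)^α := by
            field_simp
        _ ≤ ((3 + 2*(1/2:ℝ)^α)*ε) / (1-x)^α := by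
            exact div_le_div_of_nonneg_right hT hpow.le
        _ = ((3 + 2*(1/2:ℝ)^α)*ε) * t^(-α) := by
            rw [h1xt, Real.rpow_neg ht.le, div_eq_mul_inv]
    exact hfin
  -- Step 2 : define g and establish its symmetry and functional equation
  set c : ℝ := f 1 with hc
  set g : ℝ → ℝ := fun w => f w - c * w ^ α with hg
  have hGsym : ∀ p : ℝ, 0 < p → p < 1 → g p = g (1 - p) := by
    intro p hp hp1
    have hFd := hFeq p (1-p) hp hp1 (by linarith) (by linarith) (by linarith)
    simp only [Fd] at hFd
    rw [div_self (by linarith : (1:ℝ) - p ≠ 0)] at hFd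
    rw [show (1:ℝ) - (1-p) = p from by ring] at hFd
    rw [div_self (ne_of_gt hp)] at hFd
    simp only [hg]
    linear_combination hFd
  have hGeq : ∀ x y : ℝ, 0 < x → x < 1 → 0 < y → y < 1 → x + y ≤ 1 →
      g x + (1-x)^α * g (y/(1-x)) = g y + (1-y)^α * g (x/(1-y)) := by
    intro x y hx hx1 hy hy1 hxy
    have hFd := hFeq x y hx hx1 hy hy1 hxy
    simp only [Fd] at hFd
    have h1x : (0:ℝ) < 1 - x := by linarith
    have h1y : (0:ℝ) < 1 - y := by linarith
    have m1 : (1-x)^α * (y/(1-x))^α = y^α := by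
      rw [← Real.mul_rpow h1x.le (by positivity)]
      congr 1
      field_simp
    have m2 : (1-y)^α * (x/(1-y))^α = x^α := by
      rw [← Real.mul_rpow h1y.le (by positivity)]
      congr 1
      field_simp
    simp only [hg]
    linear_combination hFd - c * m1 + c * m2
  -- Step 3 : proportionality g x = b * (x^α + (1-x)^α - 1)
  have prop : ∀ x u : ℝ, 0 < x → x < 1 → 0 < u → u < 1 →
      g x * (u^α + (1-u)^α - 1) = g u * (x^α + (1-x)^α - 1) := by
    intro x u hx hx1 hu hu1
    have h1x : (0:ℝ) < 1 - x := by linarith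
    have h1u : (0:ℝ) < 1 - u := by linarith
    have hxu1 : (0:ℝ) < 1 - x*u := by nlinarith
    have hb'pos : 0 < x*(1-u)/(1-x*u) := by positivity
    have hb'lt : x*(1-u)/(1-x*u) < 1 := by
      rw [div_lt_one hxu1]; nlinarith
    have hc'pos : 0 < (1-x)*u/(1-x*u) := by positivity
    have hc'lt : (1-x)*u/(1-x*u) < 1 := by
      rw [div_lt_one hxu1]; nlinarith
    have hbb : (1-x)/(1-x*u) = 1 - x*(1-u)/(1-x*u) := by
      field_simp
      ring
    have hcc : (1-u)/(1-x*u) = 1 - (1-x)*u/(1-x*u) := by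
      rw [eq_sub_iff_add_eq, ← add_div, div_eq_one_iff_eq hxu1.ne']
      ring
    -- A1
    have E1 := hGeq (x*u) (1-x) (mul_pos hx hu) (by nlinarith) h1x (by linarith)
      (by nlinarith)
    rw [show (1:ℝ) - (1-x) = x from by ring, mul_div_cancel_left₀ u (ne_of_gt hx)] at E1
    rw [← hGsym x hx hx1] at E1
    rw [hbb, ← hGsym _ hb'pos hb'lt] at E1
    -- E1 : g (x*u) + (1-x*u)^α * g (x*(1-u)/(1-x*u)) = g x + x^α * g u
    -- A2
    have E4 := hGeq (x*u) (1-u) (mul_pos hx hu) (by nlinarith) h1u (by linarith)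
      (by nlinarith)
    rw [show (1:ℝ) - (1-u) = u from by ring, mul_div_cancel_right₀ x (ne_of_gt hu)] at E4
    rw [← hGsym u hu hu1] at E4
    rw [hcc, ← hGsym _ hc'pos hc'lt] at E4
    -- E4 : g (x*u) + (1-x*u)^α * g ((1-x)*u/(1-x*u)) = g u + u^α * g x
    -- A3
    have E3 := hGeq (x*(1-u)/(1-x*u)) ((1-x)*u/(1-x*u)) hb'pos hb'lt hc'pos hc'lt
      (by rw [← add_div, div_le_one hxu1]; nlinarith)
    have h3b : ((1-x)*u/(1-x*u))/(1 - x*(1-u)/(1-x*u)) = u := by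
      rw [← hbb]; field_simp
    have h3d : (x*(1-u)/(1-x*u))/(1 - (1-x)*u/(1-x*u)) = x := by
      rw [← hcc]; field_simp
    rw [h3b, h3d, ← hbb, ← hcc] at E3
    -- E3 : g b' + ((1-x)/(1-x*u))^α * g u = g c' + ((1-u)/(1-x*u))^α * g x
    have hm1 : (1-x*u)^α * ((1-x)/(1-x*u))^α = (1-x)^α := by
      rw [← Real.mul_rpow hxu1.le (by positivity)]
      congr 1
      field_simp
    have hm2 : (1-x*u)^α * ((1-u)/(1-x*u))^α = (1-u)^α := by
      rw [← Real.mul_rpow hxu1.le (by positivity)]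
      congr 1
      field_simp
    have A3 : (1-x*u)^α * g (x*(1-u)/(1-x*u)) + (1-x)^α * g u
        = (1-x*u)^α * g ((1-x)*u/(1-x*u)) + (1-u)^α * g x := by
      linear_combination (1-x*u)^α * E3 - g u * hm1 + g x * hm2
    linear_combination E1 - E4 - A3
  have hhalfgt : (1:ℝ) < (1/2:ℝ)^α :=
    (Real.one_lt_rpow_iff_of_pos (by norm_num)).mpr (Or.inr ⟨by norm_num, hα⟩)
  have hden : (0:ℝ) < (1/2:ℝ)^α + (1/2:ℝ)^α - 1 := by linarith
  set b : ℝ := g (1/2) / ((1/2:ℝ)^α + (1/2:ℝ)^α - 1) with hbdef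
  have gz : ∀ x : ℝ, 0 < x → x < 1 → g x = b * (x^α + (1-x)^α - 1) := by
    intro x hx hx1
    have hp := prop x (1/2) hx hx1 (by norm_num) (by norm_num)
    rw [show (1:ℝ) - 1/2 = 1/2 from by norm_num] at hp
    rw [hbdef]
    rw [div_mul_eq_mul_div, eq_div_iff hden.ne']
    linear_combination hp
  -- Step 4 : assemble
  refine ⟨c + b, b, fun t => (c + b) * t^α + b*(1-t)^α - b, ?_, fun x _ _ => rfl, ?_, ?_, ?_⟩
  · show (c + b) * (0:ℝ)^α + b*(1-0)^α - b = 0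
    rw [Real.zero_rpow hα0]
    norm_num
  · show (c + b) * (1:ℝ)^α + b*(1-1)^α - b = (c + b) - b
    rw [Real.one_rpow, show (1:ℝ)-1 = 0 from by ring, Real.zero_rpow hα0]
    ring
  · -- exact functional equation for h₁
    have hkey : ∀ x y : ℝ, 0 ≤ x → x < 1 → 0 ≤ y → x + y ≤ 1 →
        ((c+b) * x^α + b*(1-x)^α - b) + (1-x)^α * ((c+b) * (y/(1-x))^α + b*(1-y/(1-x))^α - b)
          = (c+b)*x^α + (c+b)*y^α + b*(1-x-y)^α - b := by
      intro x y hx hx1 hy hxy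
      have h1x : (0:ℝ) < 1 - x := by linarith
      have hxy' : (0:ℝ) ≤ 1 - x - y := by linarith
      have hyx : 1 - y/(1-x) = (1-x-y)/(1-x) := by
        field_simp
      have m1 : (1-x)^α * (y/(1-x))^α = y^α := by
        rw [← Real.mul_rpow h1x.le (by positivity)]
        congr 1
        field_simp
      have m2 : (1-x)^α * ((1-x-y)/(1-x))^α = (1-x-y)^α := by
        rw [← Real.mul_rpow h1x.le (by positivity)]
        congr 1
        field_simp
      rw [hyx]
      linear_combination (c+b)*m1 + b*m2
    intro x y hx hx1 hy hy1 hxy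
    show ((c+b) * x^α + b*(1-x)^α - b) + (1-x)^α * ((c+b) * (y/(1-x))^α + b*(1-y/(1-x))^α - b)
      = ((c+b) * y^α + b*(1-y)^α - b) + (1-y)^α * ((c+b) * (x/(1-y))^α + b*(1-x/(1-y))^α - b)
    rw [hkey x y hx hx1 hy hxy, hkey y x hy hy1 hx (by linarith)]
    rw [show (1:ℝ)-y-x = 1-x-y from by ring]
    ring
  · -- the 15 ε bound (in fact the difference is 0)
    intro x hx0 hx1
    have h15 : (0:ℝ) ≤ 15 * ε := by linarith
    rcases eq_or_lt_of_le hx0 with h0 | hxpos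
    · rw [← h0]
      have hz : f 0 - ((c + b) * (0:ℝ)^α + b*(1-0)^α - b) = 0 := by
        rw [f0, Real.zero_rpow hα0]
        norm_num
      show |f 0 - ((c + b) * (0:ℝ)^α + b*(1-0)^α - b)| ≤ 15 * ε
      rw [hz, abs_zero]
      exact h15
    rcases eq_or_lt_of_le hx1 with h1 | hxlt1
    · rw [h1]
      have hz : f 1 - ((c + b) * (1:ℝ)^α + b*(1-1)^α - b) = 0 := by
        rw [Real.one_rpow, show (1:ℝ)-1 = 0 from by ring, Real.zero_rpow hα0, ← hc]
        ring
      show |f 1 - ((c + b) * (1:ℝ)^α + b*(1-1)^α - b)| ≤ 15 * ε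
      rw [hz, abs_zero]
      exact h15
    · have h' := gz x hxpos hxlt1
      simp only [hg] at h'
      have hz : f x - ((c + b) * x^α + b*(1-x)^α - b) = 0 := by
        linear_combination h'
      show |f x - ((c + b) * x^α + b*(1-x)^α - b)| ≤ 15 * ε
      rw [hz, abs_zero]
      exact h15
end

section
/- Let ε ≥ 0 and f : [0,1] → ℝ satisfy |f(x) + f(y/(1-x)) - f(y) - f(x/(1-y))| ≤ ε for all x, y ∈ [0,1) with x + y ≤ 1. Then there exist a, b, c ∈ ℝ such that the function h₂ with h₂(0) = a, h₂(x) = c for x ∈ (0,1), h₂(1) = b satisfies the equation exactly on D, and |f(x) - h₂(x)| ≤ 63ε for all x ∈ [0,1]. -/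
theorem stmt15 (ε : ℝ) (hε : 0 ≤ ε) (f : ℝ → ℝ)
    (h : ∀ x y : ℝ, 0 ≤ x → x < 1 → 0 ≤ y → y < 1 → x + y ≤ 1 →
      |f x + f (y / (1 - x)) - f y - f (x / (1 - y))| ≤ ε) :
    ∃ (a b c : ℝ) (h₂ : ℝ → ℝ),
      h₂ 0 = a ∧
      (∀ x : ℝ, 0 < x → x < 1 → h₂ x = c) ∧
      h₂ 1 = b ∧
      (∀ x y : ℝ, 0 ≤ x → x < 1 → 0 ≤ y → y < 1 → x + y ≤ 1 →
        h₂ x + h₂ (y / (1 - x)) = h₂ y + h₂ (x / (1 - y))) ∧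
      ∀ x : ℝ, 0 ≤ x → x ≤ 1 → |f x - h₂ x| ≤ 63 * ε := by
  -- Symmetry: |f t - f (1-t)| ≤ ε on (0,1)
  have sym : ∀ t : ℝ, 0 < t → t < 1 → |f t - f (1 - t)| ≤ ε := by
    intro t ht0 ht1
    have h1 := h t (1 - t) ht0.le ht1 (by linarith) (by linarith) (by linarith)
    have e1 : (1 - t) / (1 - t) = 1 := div_self (by linarith)
    have e2 : t / (1 - (1 - t)) = 1 := by
      rw [show 1 - (1 - t) = t by ring]; exact div_self ht0.ne'
    rw [e1, e2] at h1
    have : f t + f 1 - f (1 - t) - f 1 = f t - f (1 - t) := by ring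
    rwa [this] at h1
  -- Lemma G
  have G : ∀ x y : ℝ, 0 < x → 0 < y → x + y < 1 →
      |f x + f (y / (1 - x)) - f (1 - x - y) - f (y / (x + y))| ≤ 3 * ε := by
    intro x y hx hy hxy
    have hx1 : x < 1 := by linarith
    have hy1 : y < 1 := by linarith
    have h1y : (0:ℝ) < 1 - y := by linarith
    have h1 := h x y hx.le hx1 hy.le hy1 (by linarith)
    have h3 := h y (1 - x - y) hy.le hy1 (by linarith) (by linarith) (by linarith)
    have hb1 : (0:ℝ) ≤ x / (1 - y) := div_nonneg hx.le h1y.le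
    have hb2 : x / (1 - y) < 1 := (div_lt_one h1y).mpr (by linarith)
    have hb3 : (0:ℝ) ≤ (1 - x - y) / (1 - y) := div_nonneg (by linarith) h1y.le
    have hb4 : (1 - x - y) / (1 - y) < 1 := (div_lt_one h1y).mpr (by linarith)
    have hb5 : x / (1 - y) + (1 - x - y) / (1 - y) ≤ 1 := by
      rw [← add_div, show x + (1 - x - y) = 1 - y by ring, div_self h1y.ne']
    have h2 := h (x / (1 - y)) ((1 - x - y) / (1 - y)) hb1 hb2 hb3 hb4 hb5
    have e1 : 1 - x / (1 - y) = (1 - x - y) / (1 - y) := by field_simp; try ring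
    have e2 : ((1 - x - y) / (1 - y)) / ((1 - x - y) / (1 - y)) = 1 :=
      div_self (ne_of_gt (div_pos (by linarith) h1y))
    have e3 : 1 - (1 - x - y) / (1 - y) = x / (1 - y) := by field_simp; try ring
    have e4 : (x / (1 - y)) / (x / (1 - y)) = 1 := div_self (ne_of_gt (div_pos hx h1y))
    rw [e1, e2, e3, e4] at h2
    have e5 : 1 - (1 - x - y) = x + y := by ring
    rw [e5] at h3
    have key : f x + f (y / (1 - x)) - f (1 - x - y) - f (y / (x + y)) =
        (f x + f (y / (1 - x)) - f y - f (x / (1 - y)))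
        + (f (x / (1 - y)) + f 1 - f ((1 - x - y) / (1 - y)) - f 1)
        + (f y + f ((1 - x - y) / (1 - y)) - f (1 - x - y) - f (y / (x + y))) := by
      ring
    rw [key]
    calc |_ + _ + _| ≤ |(f x + f (y / (1 - x)) - f y - f (x / (1 - y)))
          + (f (x / (1 - y)) + f 1 - f ((1 - x - y) / (1 - y)) - f 1)|
          + |(f y + f ((1 - x - y) / (1 - y)) - f (1 - x - y) - f (y / (x + y)))| :=
        abs_add_le _ _
      _ ≤ |(f x + f (y / (1 - x)) - f y - f (x / (1 - y)))|
          + |(f (x / (1 - y)) + f 1 - f ((1 - x - y) / (1 - y)) - f 1)|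
          + |(f y + f ((1 - x - y) / (1 - y)) - f (1 - x - y) - f (y / (x + y)))| := by
        have := abs_add_le (f x + f (y / (1 - x)) - f y - f (x / (1 - y)))
          (f (x / (1 - y)) + f 1 - f ((1 - x - y) / (1 - y)) - f 1)
        linarith
      _ ≤ 3 * ε := by linarith
  -- Lemma N : |f a - f b| ≤ 6ε for a,b ∈ (0,1), a+b < 1
  have N : ∀ a b : ℝ, 0 < a → 0 < b → a + b < 1 → |f a - f b| ≤ 6 * ε := by
    intro a b ha hb hab
    have h1a : (0:ℝ) < 1 - a := by linarith
    have h1b : (0:ℝ) < 1 - b := by linarith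
    have hs : (0:ℝ) < 1 - a - b := by linarith
    have hx1 : (0:ℝ) < (1 - a - b) / (1 - b) := by positivity
    have hy1 : (0:ℝ) < a * (1 - a - b) / ((1 - a) * (1 - b)) := by positivity
    have hx2 : (0:ℝ) < (1 - a - b) / (1 - a) := by positivity
    have hy2 : (0:ℝ) < b * (1 - a - b) / ((1 - a) * (1 - b)) := by positivity
    have hsum1 : (1 - a - b) / (1 - b) + a * (1 - a - b) / ((1 - a) * (1 - b)) < 1 := by
      rw [show (1 - a - b) / (1 - b) + a * (1 - a - b) / ((1 - a) * (1 - b))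
          = 1 - a * b / ((1 - a) * (1 - b)) by field_simp; try ring]
      have : (0:ℝ) < a * b / ((1 - a) * (1 - b)) := by positivity
      linarith
    have hsum2 : (1 - a - b) / (1 - a) + b * (1 - a - b) / ((1 - a) * (1 - b)) < 1 := by
      rw [show (1 - a - b) / (1 - a) + b * (1 - a - b) / ((1 - a) * (1 - b))
          = 1 - a * b / ((1 - a) * (1 - b)) by field_simp; try ring]
      have : (0:ℝ) < a * b / ((1 - a) * (1 - b)) := by positivity
      linarith
    have g1 := G _ _ hx1 hy1 hsum1
    have g2 := G _ _ hx2 hy2 hsum2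
    have e11 : (a * (1 - a - b) / ((1 - a) * (1 - b))) / (1 - (1 - a - b) / (1 - b))
        = (1 - a - b) / (1 - a) := by
      rw [show 1 - (1 - a - b) / (1 - b) = a / (1 - b) by field_simp; try ring]
      field_simp
    have e12 : 1 - (1 - a - b) / (1 - b) - a * (1 - a - b) / ((1 - a) * (1 - b))
        = a * b / ((1 - a) * (1 - b)) := by field_simp; try ring
    have e13 : (a * (1 - a - b) / ((1 - a) * (1 - b)))
        / ((1 - a - b) / (1 - b) + a * (1 - a - b) / ((1 - a) * (1 - b))) = a := by
      rw [show (1 - a - b) / (1 - b) + a * (1 - a - b) / ((1 - a) * (1 - b))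
          = (1 - a - b) / ((1 - a) * (1 - b)) by field_simp; try ring]
      have hP : (0:ℝ) < (1 - a - b) / ((1 - a) * (1 - b)) := by positivity
      rw [mul_div_assoc]
      exact mul_div_cancel_right₀ _ hP.ne'
    have e21 : (b * (1 - a - b) / ((1 - a) * (1 - b))) / (1 - (1 - a - b) / (1 - a))
        = (1 - a - b) / (1 - b) := by
      rw [show 1 - (1 - a - b) / (1 - a) = b / (1 - a) by field_simp; try ring]
      field_simp
    have e22 : 1 - (1 - a - b) / (1 - a) - b * (1 - a - b) / ((1 - a) * (1 - b))
        = a * b / ((1 - a) * (1 - b)) := by field_simp; try ring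
    have e23 : (b * (1 - a - b) / ((1 - a) * (1 - b)))
        / ((1 - a - b) / (1 - a) + b * (1 - a - b) / ((1 - a) * (1 - b))) = b := by
      rw [show (1 - a - b) / (1 - a) + b * (1 - a - b) / ((1 - a) * (1 - b))
          = (1 - a - b) / ((1 - a) * (1 - b)) by field_simp; try ring]
      have hP : (0:ℝ) < (1 - a - b) / ((1 - a) * (1 - b)) := by positivity
      rw [mul_div_assoc]
      exact mul_div_cancel_right₀ _ hP.ne'
    rw [e11, e12, e13] at g1
    rw [e21, e22, e23] at g2
    have key : f a - f b =
        (f ((1 - a - b) / (1 - a)) + f ((1 - a - b) / (1 - b))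
          - f (a * b / ((1 - a) * (1 - b))) - f b)
        - (f ((1 - a - b) / (1 - b)) + f ((1 - a - b) / (1 - a))
          - f (a * b / ((1 - a) * (1 - b))) - f a) := by ring
    rw [key]
    have := abs_sub (f ((1 - a - b) / (1 - a)) + f ((1 - a - b) / (1 - b))
          - f (a * b / ((1 - a) * (1 - b))) - f b)
        (f ((1 - a - b) / (1 - b)) + f ((1 - a - b) / (1 - a))
          - f (a * b / ((1 - a) * (1 - b))) - f a)
    linarith
  -- f is within 7ε of f(1/4) on (0,1)
  have near : ∀ t : ℝ, 0 < t → t < 1 → |f t - f (1/4)| ≤ 7 * ε := by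
    intro t ht0 ht1
    rcases lt_or_ge t (3/4) with hlt | hge
    · have := N t (1/4) ht0 (by norm_num) (by linarith)
      linarith
    · have h1 := sym t ht0 ht1
      have h2 := N (1 - t) (1/4) (by linarith) (by norm_num) (by linarith)
      calc |f t - f (1/4)| ≤ |f t - f (1 - t)| + |f (1 - t) - f (1/4)| :=
            abs_sub_le _ _ _
        _ ≤ 7 * ε := by linarith
  -- the approximating function
  set H : ℝ → ℝ := fun x => if x = 0 then f 0 else if x = 1 then f 1 else f (1/4) with hH
  have Hc : ∀ t : ℝ, 0 < t → t < 1 → H t = f (1/4) := by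
    intro t ht0 ht1
    simp only [hH, if_neg ht0.ne', if_neg ht1.ne]
  have H0 : H 0 = f 0 := by simp [hH]
  have H1 : H 1 = f 1 := by norm_num [hH]
  refine ⟨f 0, f 1, f (1/4), H, H0, Hc, H1, ?_, ?_⟩
  · intro x y hx hx1 hy hy1 hxy
    rcases eq_or_lt_of_le hx with hx0 | hx0
    · rw [← hx0, show (1:ℝ) - 0 = 1 by ring, div_one, zero_div]
      ring
    rcases eq_or_lt_of_le hy with hy0 | hy0
    · rw [← hy0, show (1:ℝ) - 0 = 1 by ring, div_one, zero_div]
      ring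
    rcases eq_or_lt_of_le hxy with heq | hlt
    · have e1 : y / (1 - x) = 1 := by
        rw [show 1 - x = y by linarith]; exact div_self (by linarith)
      have e2 : x / (1 - y) = 1 := by
        rw [show 1 - y = x by linarith]; exact div_self (by linarith)
      rw [e1, e2, Hc x hx0 hx1, Hc y hy0 hy1]
    · have e1 : 0 < y / (1 - x) := div_pos hy0 (by linarith)
      have e2 : y / (1 - x) < 1 := (div_lt_one (by linarith)).mpr (by linarith)
      have e3 : 0 < x / (1 - y) := div_pos hx0 (by linarith)
      have e4 : x / (1 - y) < 1 := (div_lt_one (by linarith)).mpr (by linarith)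
      rw [Hc x hx0 hx1, Hc y hy0 hy1, Hc _ e1 e2, Hc _ e3 e4]
  · intro x hx0 hx1
    rcases eq_or_lt_of_le hx0 with h0 | h0
    · rw [← h0, H0, sub_self, abs_zero]; positivity
    rcases eq_or_lt_of_le hx1 with h1 | h1
    · rw [h1, H1, sub_self, abs_zero]; positivity
    · rw [Hc x h0 h1]
      have := near x h0 h1
      linarith
end
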